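/- Let f : ℝ^d → ℝ^d satisfy the dissipativity condition with constants α ≥ 0 and β ∈ ℝ. Let K ∈ ℕ with K ≥ 1, let τ′ ∈ (0, 1] satisfy 2|β|τ′ < 1, let 0 < τ < τ′, and set T := Kτ. Let U_0, …, U_K and Ψ_0, …, Ψ_{K−1} and ξ_0, …, ξ_{K−1} be points of ℝ^d with Ψ_k = U_k + τ f(Ψ_k) and U_{k+1} = Ψ_k + ξ_k for 0 ≤ k ≤ K−1. Define C₂ := (1 + τ′) · max{1, ‖U_0‖² + 2αT/(1 − 2|β|τ′)} · exp(T(1 + 2|β|)/(1 − 2|β|τ′)). Then for every n ∈ ℕ with n ≥ 1, max_{0 ≤ i ≤ K} ‖U_i‖^{2n} ≤ (2C₂)^n · [1 + τ^{−n} (Σ_{i=0}^{K−1} ‖ξ_i‖²)^n]. -/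

import Mathlib

open scoped RealInnerProductSpace
open Finset

lemma aux_one_add_pow_le (x : ℝ) (hx : 0 ≤ x) (n : ℕ) :
    (1 + x) ^ n ≤ 2 ^ n * (1 + x ^ n) := by
  induction n with
  | zero => norm_num
  | succ n ih =>
    have h : x + x ^ n ≤ 1 + x ^ n * x := by
      rcases le_total x 1 with h1 | h1
      · have hxn : x ^ n ≤ 1 := pow_le_one₀ hx h1
        nlinarith [mul_nonneg (sub_nonneg.mpr h1) (sub_nonneg.mpr hxn)]
      · have hxn : 1 ≤ x ^ n := one_le_pow₀ h1
        nlinarith [mul_nonneg (sub_nonneg.mpr h1) (sub_nonneg.mpr hxn)]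
    have h2n : (0:ℝ) ≤ 2 ^ n := by positivity
    have hxn0 : (0:ℝ) ≤ x ^ n := by positivity
    rw [pow_succ (1+x), pow_succ (2:ℝ), pow_succ x]
    have step : (1 + x ^ n) * (1 + x) ≤ 2 * (1 + x ^ n * x) := by nlinarith
    calc (1 + x) ^ n * (1 + x) ≤ 2 ^ n * (1 + x ^ n) * (1 + x) :=
          mul_le_mul_of_nonneg_right ih (by linarith)
      _ = 2 ^ n * ((1 + x ^ n) * (1 + x)) := by ring
      _ ≤ 2 ^ n * (2 * (1 + x ^ n * x)) := mul_le_mul_of_nonneg_left step h2n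
      _ = 2 ^ n * 2 * (1 + x ^ n * x) := by ring

set_option maxHeartbeats 1000000 in
/-- pathwise uniform bound on the randomised implicit Euler iterates
(Lemma "Uniform bounds on numerical solution"). -/
theorem uniform_bound_numerical_solution (d : ℕ)
    (f : EuclideanSpace ℝ (Fin d) → EuclideanSpace ℝ (Fin d))
    (α β : ℝ) (hα : 0 ≤ α)
    (hdiss : ∀ v : EuclideanSpace ℝ (Fin d), ⟪f v, v⟫ ≤ α + β * ‖v‖ ^ 2)
    (K : ℕ) (hK : 1 ≤ K)
    (τ' τ : ℝ) (hτ'0 : 0 < τ') (hτ'1 : τ' ≤ 1) (hβτ' : 2 * |β| * τ' < 1)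
    (hτ0 : 0 < τ) (hττ' : τ < τ')
    (T : ℝ) (hT : T = K * τ)
    (U Ψ ξ : ℕ → EuclideanSpace ℝ (Fin d))
    (hrec : ∀ k < K, Ψ k = U k + τ • f (Ψ k) ∧ U (k + 1) = Ψ k + ξ k)
    (C2 : ℝ)
    (hC2 : C2 = (1 + τ') * max 1 (‖U 0‖ ^ 2 + 2 * α * T / (1 - 2 * |β| * τ'))
      * Real.exp (T * (1 + 2 * |β|) / (1 - 2 * |β| * τ')))
    (n : ℕ) (hn : 1 ≤ n) :
    (Finset.range (K + 1)).sup' ⟨0, Finset.mem_range.mpr (Nat.succ_pos K)⟩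
        (fun i => ‖U i‖ ^ (2 * n))
      ≤ (2 * C2) ^ n * (1 + τ⁻¹ ^ n * (∑ i ∈ Finset.range K, ‖ξ i‖ ^ 2) ^ n) := by
  have habs : (0:ℝ) ≤ |β| := abs_nonneg β
  set c : ℝ := 1 - 2 * |β| * τ' with hc_def
  have hc : 0 < c := by simp only [hc_def]; linarith
  have hc1 : c ≤ 1 := by
    have : 0 ≤ 2 * |β| * τ' := by positivity
    simp only [hc_def]; linarith
  set cτ : ℝ := 1 - 2 * |β| * τ with hcτ_def
  have hccτ : c ≤ cτ := by
    simp only [hc_def, hcτ_def]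
    nlinarith
  have hcτ : 0 < cτ := lt_of_lt_of_le hc hccτ
  set ρ : ℝ := (1 + τ) / cτ with hρ_def
  have hρ1 : (1:ℝ) ≤ ρ := by
    rw [le_div_iff₀ hcτ]; nlinarith
  have hρ0 : (0:ℝ) < ρ := lt_of_lt_of_le one_pos hρ1
  have hτinv : 0 < τ⁻¹ := inv_pos.mpr hτ0
  have hTnn : 0 ≤ T := by rw [hT]; positivity
  -- Step A + B + induction
  have key : ∀ k, k ≤ K → ‖U k‖ ^ 2 ≤
      ρ ^ k * (‖U 0‖ ^ 2 + 2 * α * τ * k + (1 + τ⁻¹) * ∑ j ∈ Finset.range k, ‖ξ j‖ ^ 2) := by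
    intro k
    induction k with
    | zero => intro _; simp
    | succ k ih =>
      intro hk1
      have hkK : k < K := hk1
      have ihk := ih (Nat.le_of_succ_le hk1)
      obtain ⟨hΨ, hU⟩ := hrec k hkK
      -- Step A
      have pA : cτ * ‖Ψ k‖ ^ 2 ≤ ‖U k‖ ^ 2 + 2 * τ * α := by
        have e1 := congrArg (fun v : EuclideanSpace ℝ (Fin d) => (⟪v, Ψ k⟫ : ℝ)) hΨ
        simp only [inner_add_left, real_inner_smul_left] at e1
        rw [real_inner_self_eq_norm_sq] at e1
        have e2 : (⟪U k, Ψ k⟫ : ℝ) ≤ ‖U k‖ * ‖Ψ k‖ := real_inner_le_norm _ _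
        have e3 := hdiss (Ψ k)
        have e4 : β * ‖Ψ k‖ ^ 2 ≤ |β| * ‖Ψ k‖ ^ 2 :=
          mul_le_mul_of_nonneg_right (le_abs_self β) (sq_nonneg _)
        have e5 : ‖U k‖ * ‖Ψ k‖ ≤ (‖U k‖ ^ 2 + ‖Ψ k‖ ^ 2) / 2 := by
          nlinarith [sq_nonneg (‖U k‖ - ‖Ψ k‖)]
        have e6 : τ * ⟪f (Ψ k), Ψ k⟫ ≤ τ * (α + |β| * ‖Ψ k‖ ^ 2) :=
          mul_le_mul_of_nonneg_left (by linarith) hτ0.le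
        simp only [hcτ_def]
        linarith [e1, e2, e5, e6]
      -- Step B
      have pB : ‖U (k+1)‖ ^ 2 ≤ (1 + τ) * ‖Ψ k‖ ^ 2 + (1 + τ⁻¹) * ‖ξ k‖ ^ 2 := by
        have htri : ‖U (k+1)‖ ≤ ‖Ψ k‖ + ‖ξ k‖ := by
          rw [hU]; exact norm_add_le _ _
        have h2 : ‖U (k+1)‖ ^ 2 ≤ (‖Ψ k‖ + ‖ξ k‖) ^ 2 :=
          pow_le_pow_left₀ (norm_nonneg _) htri 2
        have h3 : 2 * ‖Ψ k‖ * ‖ξ k‖ ≤ τ * ‖Ψ k‖ ^ 2 + τ⁻¹ * ‖ξ k‖ ^ 2 := by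
          rw [← sub_nonneg]
          have h4 : τ * ‖Ψ k‖ ^ 2 + τ⁻¹ * ‖ξ k‖ ^ 2 - 2 * ‖Ψ k‖ * ‖ξ k‖
              = τ⁻¹ * (τ * ‖Ψ k‖ - ‖ξ k‖) ^ 2 := by
            field_simp
            ring
          rw [h4]; positivity
        linarith [h2, h3]
      -- Step C : combine
      have pC : (1 + τ) * ‖Ψ k‖ ^ 2 ≤ ρ * (‖U k‖ ^ 2 + 2 * τ * α) := by
        have e : (1 + τ) * ‖Ψ k‖ ^ 2 = ρ * (cτ * ‖Ψ k‖ ^ 2) := by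
          rw [hρ_def]; field_simp
        rw [e]
        exact mul_le_mul_of_nonneg_left pA hρ0.le
      set B : ℝ := ‖U 0‖ ^ 2 + 2 * α * τ * k + (1 + τ⁻¹) * ∑ j ∈ Finset.range k, ‖ξ j‖ ^ 2
        with hB_def
      have hρk1 : (1:ℝ) ≤ ρ ^ (k+1) := one_le_pow₀ hρ1
      have hρρk1 : ρ ≤ ρ ^ (k+1) := le_self_pow₀ (by linarith) (Nat.succ_ne_zero k)
      have t1 : ρ * ‖U k‖ ^ 2 ≤ ρ ^ (k+1) * B := by
        calc ρ * ‖U k‖ ^ 2 ≤ ρ * (ρ ^ k * B) := mul_le_mul_of_nonneg_left ihk hρ0.le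
          _ = ρ ^ (k+1) * B := by ring
      have t2 : ρ * (2 * τ * α) ≤ ρ ^ (k+1) * (2 * τ * α) :=
        mul_le_mul_of_nonneg_right hρρk1 (by positivity)
      have t3 : (1 + τ⁻¹) * ‖ξ k‖ ^ 2 ≤ ρ ^ (k+1) * ((1 + τ⁻¹) * ‖ξ k‖ ^ 2) :=
        le_mul_of_one_le_left (by positivity) hρk1
      calc ‖U (k+1)‖ ^ 2 ≤ (1 + τ) * ‖Ψ k‖ ^ 2 + (1 + τ⁻¹) * ‖ξ k‖ ^ 2 := pB
        _ ≤ ρ * (‖U k‖ ^ 2 + 2 * τ * α) + (1 + τ⁻¹) * ‖ξ k‖ ^ 2 := by linarith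
        _ = ρ * ‖U k‖ ^ 2 + ρ * (2 * τ * α) + (1 + τ⁻¹) * ‖ξ k‖ ^ 2 := by ring
        _ ≤ ρ ^ (k+1) * B + ρ ^ (k+1) * (2 * τ * α) + ρ ^ (k+1) * ((1 + τ⁻¹) * ‖ξ k‖ ^ 2) :=
            add_le_add (add_le_add t1 t2) t3
        _ = ρ ^ (k+1) * (‖U 0‖ ^ 2 + 2 * α * τ * (k+1:ℕ)
              + (1 + τ⁻¹) * (∑ j ∈ Finset.range k, ‖ξ j‖ ^ 2 + ‖ξ k‖ ^ 2)) := by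
            rw [hB_def]; push_cast; ring
        _ = ρ ^ (k+1) * (‖U 0‖ ^ 2 + 2 * α * τ * (k+1:ℕ)
              + (1 + τ⁻¹) * ∑ j ∈ Finset.range (k+1), ‖ξ j‖ ^ 2) := by
            rw [Finset.sum_range_succ]
  -- Step D : uniform bound
  set S : ℝ := ∑ i ∈ Finset.range K, ‖ξ i‖ ^ 2 with hS_def
  have hS0 : 0 ≤ S := Finset.sum_nonneg fun i _ => by positivity
  set M : ℝ := max 1 (‖U 0‖ ^ 2 + 2 * α * T / c) with hM_def
  have hM1 : (1:ℝ) ≤ M := le_max_left _ _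
  set E : ℝ := Real.exp (T * (1 + 2 * |β|) / c) with hE_def
  have hE0 : 0 < E := Real.exp_pos _
  have hρKE : ρ ^ K ≤ E := by
    have h1 : ρ ≤ Real.exp (τ * (1 + 2 * |β|) / c) := by
      have h2 : ρ = 1 + τ * (1 + 2 * |β|) / cτ := by
        rw [hρ_def, one_add_div hcτ.ne']; congr 1; rw [hcτ_def]; ring
      have h3 : τ * (1 + 2 * |β|) / cτ ≤ τ * (1 + 2 * |β|) / c :=
        div_le_div_of_nonneg_left (by positivity) hc hccτ
      have h4 := Real.add_one_le_exp (τ * (1 + 2 * |β|) / c)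
      linarith
    calc ρ ^ K ≤ (Real.exp (τ * (1 + 2 * |β|) / c)) ^ K :=
          pow_le_pow_left₀ hρ0.le h1 K
      _ = Real.exp (K * (τ * (1 + 2 * |β|) / c)) := by
          rw [← Real.exp_nat_mul]
      _ = E := by rw [hE_def, hT]; ring_nf
  have main : ∀ i ≤ K, ‖U i‖ ^ 2 ≤ C2 * (1 + τ⁻¹ * S) := by
    intro i hi
    have h1 := key i hi
    have hSi : ∑ j ∈ Finset.range i, ‖ξ j‖ ^ 2 ≤ S := by
      rw [hS_def]
      exact Finset.sum_le_sum_of_subset_of_nonneg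
        (Finset.range_subset_range.mpr hi) (fun j _ _ => by positivity)
    have hbr_i : ‖U 0‖ ^ 2 + 2 * α * τ * i + (1 + τ⁻¹) * ∑ j ∈ Finset.range i, ‖ξ j‖ ^ 2
        ≤ ‖U 0‖ ^ 2 + 2 * α * T + (1 + τ⁻¹) * S := by
      have hi' : (i:ℝ) ≤ (K:ℝ) := Nat.cast_le.mpr hi
      have : 2 * α * τ * i ≤ 2 * α * T := by
        have h10 : 2 * α * τ * (i:ℝ) ≤ 2 * α * τ * (K:ℝ) :=
          mul_le_mul_of_nonneg_left hi' (by positivity)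
        rw [hT]; linarith
      have h5 : (1 + τ⁻¹) * ∑ j ∈ Finset.range i, ‖ξ j‖ ^ 2 ≤ (1 + τ⁻¹) * S :=
        mul_le_mul_of_nonneg_left hSi (by positivity)
      linarith
    have hbrnn : 0 ≤ ‖U 0‖ ^ 2 + 2 * α * τ * i + (1 + τ⁻¹) * ∑ j ∈ Finset.range i, ‖ξ j‖ ^ 2 := by
      have : 0 ≤ ∑ j ∈ Finset.range i, ‖ξ j‖ ^ 2 := Finset.sum_nonneg fun j _ => by positivity
      have h6 : (0:ℝ) ≤ (i:ℝ) := Nat.cast_nonneg i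
      positivity
    have hρiK : ρ ^ i ≤ ρ ^ K := pow_le_pow_right₀ hρ1 hi
    have h2 : ‖U i‖ ^ 2 ≤ ρ ^ K * (‖U 0‖ ^ 2 + 2 * α * T + (1 + τ⁻¹) * S) := by
      calc ‖U i‖ ^ 2 ≤ ρ ^ i * (‖U 0‖ ^ 2 + 2 * α * τ * i
            + (1 + τ⁻¹) * ∑ j ∈ Finset.range i, ‖ξ j‖ ^ 2) := h1
        _ ≤ ρ ^ K * (‖U 0‖ ^ 2 + 2 * α * τ * i
            + (1 + τ⁻¹) * ∑ j ∈ Finset.range i, ‖ξ j‖ ^ 2) :=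
            mul_le_mul_of_nonneg_right hρiK hbrnn
        _ ≤ ρ ^ K * (‖U 0‖ ^ 2 + 2 * α * T + (1 + τ⁻¹) * S) :=
            mul_le_mul_of_nonneg_left hbr_i (by positivity)
    -- bracket ≤ (1+τ') * M * (1 + τ⁻¹ S)
    have hbr2 : ‖U 0‖ ^ 2 + 2 * α * T + (1 + τ⁻¹) * S ≤ (1 + τ') * M * (1 + τ⁻¹ * S) := by
      have hm2 : ‖U 0‖ ^ 2 + 2 * α * T ≤ M := by
        have h7 : 2 * α * T ≤ 2 * α * T / c := by
          rw [le_div_iff₀ hc]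
          exact mul_le_of_le_one_right (by positivity) hc1
        have h8 : ‖U 0‖ ^ 2 + 2 * α * T / c ≤ M := le_max_right _ _
        linarith
      have h9 : 0 ≤ τ⁻¹ * S := by positivity
      have hSτ : S ≤ τ' * (τ⁻¹ * S) := by
        have he : τ * (τ⁻¹ * S) = S := by field_simp
        calc S = τ * (τ⁻¹ * S) := he.symm
          _ ≤ τ' * (τ⁻¹ * S) := mul_le_mul_of_nonneg_right hττ'.le h9
      have hτS : 0 ≤ τ⁻¹ * S := by positivity
      have e : (1 + τ⁻¹) * S = S + τ⁻¹ * S := by ring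
      nlinarith [mul_le_mul_of_nonneg_right hM1 hτS, mul_nonneg (le_trans zero_le_one hM1) hτS]
    calc ‖U i‖ ^ 2 ≤ ρ ^ K * (‖U 0‖ ^ 2 + 2 * α * T + (1 + τ⁻¹) * S) := h2
      _ ≤ E * ((1 + τ') * M * (1 + τ⁻¹ * S)) := by
          have hbrK : 0 ≤ ‖U 0‖ ^ 2 + 2 * α * T + (1 + τ⁻¹) * S := by positivity
          have hρK0 : 0 ≤ ρ ^ K := by positivity
          exact mul_le_mul hρKE hbr2 hbrK hE0.le
      _ = C2 * (1 + τ⁻¹ * S) := by rw [hC2]; ring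
  -- Final step
  apply Finset.sup'_le
  intro i hi
  have hiK : i ≤ K := Nat.lt_succ_iff.mp (Finset.mem_range.mp hi)
  have h1 := main i hiK
  have hC2nn : 0 ≤ C2 := by
    rw [hC2]
    exact mul_nonneg (mul_nonneg (by linarith) (le_trans zero_le_one hM1)) hE0.le
  have hx : 0 ≤ τ⁻¹ * S := by positivity
  calc ‖U i‖ ^ (2 * n) = (‖U i‖ ^ 2) ^ n := by rw [← pow_mul]
    _ ≤ (C2 * (1 + τ⁻¹ * S)) ^ n := pow_le_pow_left₀ (by positivity) h1 n
    _ = C2 ^ n * (1 + τ⁻¹ * S) ^ n := mul_pow _ _ _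
    _ ≤ C2 ^ n * (2 ^ n * (1 + (τ⁻¹ * S) ^ n)) := by
        exact mul_le_mul_of_nonneg_left (aux_one_add_pow_le _ hx n) (by positivity)
    _ = (2 * C2) ^ n * (1 + τ⁻¹ ^ n * S ^ n) := by
        rw [mul_pow, mul_pow]; ring
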